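/- Let B be a polynomial factor of degree d, complexity C, and rank greater than r(d,ε) (the rank from the bias-implies-low-rank theorem), defined by polynomials P_1,...,P_C with degrees d_i and depths k_i. Let A = (L_1,...,L_m) be an affine constraint on ℓ variables, and let b_1,...,b_m ∈ 𝕋^C be atoms of B that are B-consistent with A. Then Pr_{x_1,...,x_ℓ}[∀j ∈ [m], (P_1(L_j(x)),...,P_C(L_j(x))) = b_j] = (∏_{i=1}^C |Λ_i|)/‖B‖^m ± ε, where Λ_i is the (d_i,k_i)-dependency set of A and ‖B‖ = ∏_i p^{k_i+1}. -/

import Mathlib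

open scoped BigOperators

noncomputable section

/-- The circle group `𝕋 = ℝ/ℤ`. -/
abbrev 𝕋 : Type := AddCircle (1 : ℝ)

/-- The character `e(x) = e^{2πix}` on `𝕋`, valued in `ℂ`. -/
def ee (x : 𝕋) : ℂ := (AddCircle.toCircle x : ℂ)

/-- The average `E_{x ∈ α}[f(x)]` of a complex-valued function on a finite type. -/
def cavg {α : Type*} [Fintype α] (f : α → ℂ) : ℂ := (∑ x, f x) / (Fintype.card α : ℂ)

/-- The average of a real-valued function on a finite type. -/
def ravg {α : Type*} [Fintype α] (f : α → ℝ) : ℝ := (∑ x, f x) / (Fintype.card α : ℝ)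

/-- Multiplicative derivative `Δ_h f (x) = f(x+h) conj (f x)`. -/
def mDeriv {G : Type*} [Add G] (h : G) (f : G → ℂ) : G → ℂ :=
  fun x => f (x + h) * (starRingEnd ℂ) (f x)

/-- `E_{h_1,…,h_d,x}[(Δ_{h_1} ⋯ Δ_{h_d} f)(x)]`. -/
def gowersAvg {G : Type*} [AddCommGroup G] [Fintype G] : ℕ → (G → ℂ) → ℂ
  | 0, f => cavg f
  | d + 1, f => cavg fun h => gowersAvg d (mDeriv h f)

/-- The Gowers norm `‖f‖_{U^d} = |E_{h_1,…,h_d,x}[(Δ_{h_1} ⋯ Δ_{h_d} f)(x)]|^{1/2^d}`. -/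
def gowersNorm {G : Type*} [AddCommGroup G] [Fintype G] (d : ℕ) (f : G → ℂ) : ℝ :=
  ‖gowersAvg d f‖ ^ ((1 : ℝ) / 2 ^ d)

/-- Additive derivative `D_h P (x) = P(x+h) - P(x)`. -/
def aDeriv {G M : Type*} [Add G] [Sub M] (h : G) (P : G → M) : G → M :=
  fun x => P (x + h) - P x

/-- Iterated additive derivative `D_{h_1} ⋯ D_{h_k} P`. -/
def iterADeriv {G M : Type*} [AddCommGroup G] [AddCommGroup M] :
    {k : ℕ} → (Fin k → G) → (G → M) → (G → M)
  | 0, _, P => P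
  | _ + 1, h, P => aDeriv (h 0) (iterADeriv (Fin.tail h) P)

/-- `P` is a (non-classical) polynomial of degree ≤ `d`:
all `(d+1)`-fold additive derivatives vanish identically. -/
def IsPolyDeg {G M : Type*} [AddCommGroup G] [AddCommGroup M] (d : ℕ) (P : G → M) : Prop :=
  ∀ (h : Fin (d + 1) → G) (x : G), iterADeriv h P x = 0

/-- `P` has degree exactly `d`. -/
def ExactDeg {G M : Type*} [AddCommGroup G] [AddCommGroup M] (d : ℕ) (P : G → M) : Prop :=
  IsPolyDeg d P ∧ ∀ d' < d, ¬ IsPolyDeg d' P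

/-- The degree of a polynomial: the least `d` with `IsPolyDeg d P`. -/
def polyDeg {G M : Type*} [AddCommGroup G] [AddCommGroup M] (P : G → M) : ℕ :=
  sInf {d | IsPolyDeg d P}

/-- `P` has `d`-rank at most `r`: `P = Γ(Q_1,…,Q_r)` with the `Q_i` of degree ≤ `d-1`. -/
def HasRankLE {G : Type*} [AddCommGroup G] (d : ℕ) (P : G → 𝕋) (r : ℕ) : Prop :=
  ∃ (Q : Fin r → G → 𝕋) (Γ : (Fin r → 𝕋) → 𝕋),
    (∀ i, IsPolyDeg (d - 1) (Q i)) ∧ ∀ x, P x = Γ fun i => Q i x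

/-- The `d`-rank of `P`, in `ℕ∞` (`⊤` if no finite decomposition exists;
for `d = 1` this is `⊤` exactly when `P` is non-constant). -/
def rankd {G : Type*} [AddCommGroup G] (d : ℕ) (P : G → 𝕋) : ℕ∞ :=
  sInf {r : ℕ∞ | ∃ m : ℕ, r = m ∧ HasRankLE d P m}

/-- `P` has depth exactly `k` (shift zero): values in `U_{k+1} = (1/p^{k+1})ℤ/ℤ` but not all
in `U_k`. -/
def ExactDepth {G : Type*} (p k : ℕ) (P : G → 𝕋) : Prop :=
  (∀ x, (p ^ (k + 1)) • P x = 0) ∧ ¬ (∀ x, (p ^ k) • P x = 0)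

/-- Application of a linear form `L = (w_t)_t` to a tuple of points of `F_p^n`:
`(x_t)_t ↦ ∑_t w_t x_t`. -/
def formApply {p : ℕ} {ι : Type*} [Fintype ι] {n : ℕ} (L : ι → ZMod p)
    (x : ι → Fin n → ZMod p) : Fin n → ZMod p := ∑ t, L t • x t

/-- The `(d,k)`-dependency set of a system of forms `L`: the tuples
`(λ_j) ∈ [0, p^{k+1}-1]^m` with `∑_j λ_j P(L_j(x)) ≡ 0` for every non-classical polynomial `P`
of degree `d` and depth `k` (over every `F_p^n`). -/
def DepSet (p k d : ℕ) {ι μ : Type*} [Fintype ι] [Fintype μ]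
    (L : μ → ι → ZMod p) : Set (μ → ℕ) :=
  {lam | (∀ j, lam j < p ^ (k + 1)) ∧
    ∀ (n : ℕ) (P : (Fin n → ZMod p) → 𝕋), ExactDeg d P → ExactDepth p k P →
      ∀ x : ι → Fin n → ZMod p, (∑ j, lam j • P (formApply (L j) x)) = 0}

/-- `b_1,…,b_m ∈ 𝕋^κ` are consistent with the forms `L` with respect to degree data `dd`
and depth data `kk`. -/
def ConsistentWith (p : ℕ) {ι κ : Type*} [Fintype ι] [Fintype κ] {m : ℕ}
    (L : Fin m → ι → ZMod p) (dd kk : κ → ℕ) (b : Fin m → κ → 𝕋) : Prop :=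
  ∀ i : κ, (∀ j, (p ^ (kk i + 1)) • b j i = 0) ∧
    ∀ lam ∈ DepSet p (kk i) (dd i) L, (∑ j, lam j • b j i) = 0

/-- The polynomial factor defined by `P_1,…,P_C` with depths `k_1,…,k_C` has rank greater
than `r`: every integer combination `∑ λ_i P_i`, with the `λ_i` not all divisible by the
respective `p^{k_i+1}`, has `D`-rank > `r` where `D = max_i deg(λ_i P_i)`. -/
def FactorRankGT (p : ℕ) {G : Type*} [AddCommGroup G] {C : ℕ}
    (P : Fin C → G → 𝕋) (k : Fin C → ℕ) (r : ℕ) : Prop :=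
  ∀ lam : Fin C → ℤ, (∃ i, ¬ ((p : ℤ) ^ (k i + 1) ∣ lam i)) →
    (r : ℕ∞) < rankd (Finset.univ.sup fun i => polyDeg fun x => lam i • P i x)
      (fun x => ∑ i, lam i • P i x)

/-- Cauchy–Schwarz complexity ≤ `d`: for each `i`, the remaining forms can be partitioned into
`d+1` classes, with `L_i` outside the linear span of each class. -/
def CSComplexityLE (p : ℕ) {m : ℕ} {ι : Type*} [Fintype ι] (d : ℕ)
    (L : Fin m → ι → ZMod p) : Prop :=
  ∀ i, ∃ c : Fin m → Fin (d + 1), ∀ t,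
    L i ∉ Submodule.span (ZMod p) {v | ∃ j, j ≠ i ∧ c j = t ∧ v = L j}


section Helpers

lemma ee_zero' : ee 0 = 1 := by
  simp [ee]

lemma ee_add' (x y : 𝕋) : ee (x + y) = ee x * ee y := by
  simp [ee, AddCircle.toCircle_add]

lemma ee_nsmul' (t : ℕ) (x : 𝕋) : ee (t • x) = ee x ^ t := by
  induction t with
  | zero => simpa using ee_zero'
  | succ t ih => rw [succ_nsmul, ee_add', ih, pow_succ]

lemma abs_ee' (x : 𝕋) : ‖ee x‖ = 1 := Circle.norm_coe _

lemma ee_eq_one_iff' {x : 𝕋} : ee x = 1 ↔ x = 0 := by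
  constructor
  · intro h
    have hinj := AddCircle.injective_toCircle (T := (1 : ℝ)) one_ne_zero
    apply hinj
    rw [AddCircle.toCircle_zero]
    exact Circle.coe_eq_one.mp h
  · rintro rfl; exact ee_zero'

lemma ee_sum' {α : Type*} (s : Finset α) (f : α → 𝕋) :
    ee (∑ a ∈ s, f a) = ∏ a ∈ s, ee (f a) := by
  induction s using Finset.cons_induction with
  | empty => simpa using ee_zero'
  | cons a s ha ih => rw [Finset.sum_cons, Finset.prod_cons, ee_add', ih]

lemma char_sum' {q : ℕ} (hq : 0 < q) {y : 𝕋} (hy : q • y = 0) :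
    (∑ lam ∈ Finset.range q, ee (lam • y)) = if y = 0 then (q : ℂ) else 0 := by
  simp_rw [ee_nsmul']
  by_cases h : y = 0
  · simp [h, ee_zero']
  · rw [if_neg h]
    have hz1 : ee y ≠ 1 := fun hc => h (ee_eq_one_iff'.mp hc)
    have hq1 : ee y ^ q = 1 := by rw [← ee_nsmul', hy, ee_zero']
    have hgeom := geom_sum_mul (ee y) q
    rw [hq1, sub_self] at hgeom
    exact (mul_eq_zero.mp hgeom).resolve_right (sub_ne_zero.mpr hz1)

lemma ind_expand' {q : ℕ} (hq : 0 < q) {y : 𝕋} (hy : q • y = 0) :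
    (if y = 0 then (1 : ℂ) else 0) = (∑ lam ∈ Finset.range q, ee (lam • y)) / q := by
  have hq0 : (q : ℂ) ≠ 0 := Nat.cast_ne_zero.mpr hq.ne'
  rw [char_sum' hq hy]
  by_cases h : y = 0 <;> simp [h, hq0]

end Helpers

/-- equidistribution over an affine constraint. For a factor of rank
> `rε` (with `rε` from the bias-implies-low-rank theorem, and assuming the
near-orthogonality theorem `hortho`), and atoms `b_1,…,b_m` consistent with `A`,
`Pr_x[∀ j, B(L_j(x)) = b_j] = (∏_i |Λ_i|)/‖B‖^m ± ε`. -/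
theorem affine_equidistribution (p : ℕ) [Fact p.Prime] (n C d m ℓ : ℕ)
    (ε : ℝ) (hε : 0 < ε) (rε : ℕ)
    (P : Fin C → (Fin n → ZMod p) → 𝕋) (dd k : Fin C → ℕ)
    (hdle : ∀ i, dd i ≤ d)
    (hdeg : ∀ i, ExactDeg (dd i) (P i))
    (hdepth : ∀ i, ExactDepth p (k i) (P i))
    (hbias : ∀ Q : (Fin n → ZMod p) → 𝕋, IsPolyDeg d Q →
      (rε : ℕ∞) < rankd (polyDeg Q) Q →
      ‖(cavg fun x => ee (Q x))‖ < ε)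
    (hrank : FactorRankGT p P k rε)
    (L : Fin m → Fin (ℓ + 1) → ZMod p)
    (haff : ∀ j, L j 0 = 1)
    (b : Fin m → Fin C → 𝕋)
    (hcons : ConsistentWith p L dd k b)
    (hortho : ∀ lam : Fin C → Fin m → ℕ, (∀ i j, lam i j < p ^ (k i + 1)) →
      ((∀ x : Fin (ℓ + 1) → Fin n → ZMod p,
          (∑ i, ∑ j, lam i j • P i (formApply (L j) x)) = 0)
        ↔ ∀ i, lam i ∈ DepSet p (k i) (dd i) L) ∧
      (¬ (∀ x : Fin (ℓ + 1) → Fin n → ZMod p,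
          (∑ i, ∑ j, lam i j • P i (formApply (L j) x)) = 0) →
        ‖(cavg fun x : Fin (ℓ + 1) → Fin n → ZMod p =>
          ee (∑ i, ∑ j, lam i j • P i (formApply (L j) x)))‖ < ε)) :
    |(Nat.card {x : Fin (ℓ + 1) → Fin n → ZMod p //
          ∀ j i, P i (formApply (L j) x) = b j i} : ℝ) /
        (Fintype.card (Fin (ℓ + 1) → Fin n → ZMod p) : ℝ)
      - (∏ i, (Set.ncard (DepSet p (k i) (dd i) L) : ℝ)) /
          (∏ i, (p : ℝ) ^ (k i + 1)) ^ m| ≤ ε := by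
  classical
  have hp : 0 < p := (Fact.out : p.Prime).pos
  set q : Fin C → ℕ := fun i => p ^ (k i + 1) with hqdef
  have hqpos : ∀ i, 0 < q i := fun i => pow_pos hp _
  set Λ : Fin C → Set (Fin m → ℕ) := fun i => DepSet p (k i) (dd i) L with hΛdef
  have hΛfin : ∀ i, (Λ i).Finite := by
    intro i
    apply Set.Finite.subset (Set.Finite.pi (fun j : Fin m => Set.finite_Iio (q i)))
    intro f hf
    simp only [Set.mem_pi, Set.mem_univ, Set.mem_Iio, forall_true_left]
    exact fun j => hf.1 j
  set N := Fintype.card (Fin (ℓ + 1) → Fin n → ZMod p) with hNdef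
  have hNpos : 0 < N := Fintype.card_pos
  set F : Finset (Fin C → Fin m → ℕ) :=
    Fintype.piFinset (fun i => Fintype.piFinset fun _ : Fin m => Finset.range (q i)) with hFdef
  have hmemF : ∀ g, g ∈ F ↔ ∀ i j, g i j < q i := by
    intro g
    simp [hFdef, Fintype.mem_piFinset, Finset.mem_range]
  set Qn : ℕ := ∏ i, q i ^ m with hQndef
  have hQnpos : 0 < Qn := Finset.prod_pos fun i _ => pow_pos (hqpos i) m
  have hcardF : F.card = Qn := by
    rw [hFdef, Fintype.card_piFinset]
    refine Finset.prod_congr rfl fun i _ => ?_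
    rw [Fintype.card_piFinset]
    simp
  -- pointwise Fourier expansion of the indicator
  have hpoint : ∀ x : Fin (ℓ + 1) → Fin n → ZMod p,
      (if (∀ j i, P i (formApply (L j) x) = b j i) then (1 : ℂ) else 0)
        = (∑ g ∈ F, ee ((∑ i, ∑ j, g i j • P i (formApply (L j) x))
            - ∑ i, ∑ j, g i j • b j i)) / (Qn : ℂ) := by
    intro x
    have hiff : (∀ (j : Fin m) (i : Fin C), P i (formApply (L j) x) = b j i)
        ↔ ∀ (i : Fin C) (j : Fin m), P i (formApply (L j) x) - b j i = 0 := by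
      simp only [sub_eq_zero]
      exact forall_comm
    have h1 : (if (∀ j i, P i (formApply (L j) x) = b j i) then (1 : ℂ) else 0)
        = ∏ i, ∏ j, (if P i (formApply (L j) x) - b j i = 0 then (1 : ℂ) else 0) := by
      by_cases hcond : ∀ j i, P i (formApply (L j) x) = b j i
      · rw [if_pos hcond]
        symm
        refine Finset.prod_eq_one fun i _ => Finset.prod_eq_one fun j _ => ?_
        rw [if_pos (by rw [sub_eq_zero]; exact hcond j i)]
      · rw [if_neg hcond]
        symm
        push_neg at hcond
        obtain ⟨j, i, hne⟩ := hcond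
        refine Finset.prod_eq_zero (Finset.mem_univ i) ?_
        refine Finset.prod_eq_zero (Finset.mem_univ j) ?_
        rw [if_neg (by rw [sub_eq_zero]; exact hne)]
    have h2 : ∀ (i : Fin C) (j : Fin m),
        (if P i (formApply (L j) x) - b j i = 0 then (1 : ℂ) else 0)
          = (∑ lam ∈ Finset.range (q i),
              ee (lam • (P i (formApply (L j) x) - b j i))) / (q i : ℂ) := by
      intro i j
      apply ind_expand' (hqpos i)
      rw [nsmul_sub, (hdepth i).1, (hcons i).1 j, sub_zero]
    rw [h1]
    simp_rw [h2]
    simp only [Finset.prod_div_distrib]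
    have hden : (∏ _i : Fin C, ∏ _j : Fin m, (q _i : ℂ)) = (Qn : ℂ) := by
      rw [hQndef]
      push_cast
      refine Finset.prod_congr rfl fun i _ => ?_
      simp [Finset.prod_const]
    rw [hden]
    congr 1
    calc (∏ i, ∏ j, ∑ lam ∈ Finset.range (q i),
            ee (lam • (P i (formApply (L j) x) - b j i)))
        = ∏ i, ∑ h ∈ Fintype.piFinset (fun _ : Fin m => Finset.range (q i)),
            ∏ j, ee (h j • (P i (formApply (L j) x) - b j i)) :=
          Finset.prod_congr rfl fun i _ => Finset.prod_univ_sum _ _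
      _ = ∑ g ∈ F, ∏ i, ∏ j, ee (g i j • (P i (formApply (L j) x) - b j i)) :=
          Finset.prod_univ_sum _ _
      _ = ∑ g ∈ F, ee ((∑ i, ∑ j, g i j • P i (formApply (L j) x))
            - ∑ i, ∑ j, g i j • b j i) := by
          refine Finset.sum_congr rfl fun g _ => ?_
          have harg : (∑ i, ∑ j, g i j • P i (formApply (L j) x))
              - (∑ i, ∑ j, g i j • b j i)
              = ∑ i, ∑ j, g i j • (P i (formApply (L j) x) - b j i) := by
            simp_rw [nsmul_sub, Finset.sum_sub_distrib]
          rw [harg, ee_sum']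
          exact Finset.prod_congr rfl fun i _ => (ee_sum' _ _).symm
  -- notation for the inner exponential sums
  set S : (Fin C → Fin m → ℕ) → ℂ := fun g => ∑ x : Fin (ℓ + 1) → Fin n → ZMod p,
    ee ((∑ i, ∑ j, g i j • P i (formApply (L j) x)) - ∑ i, ∑ j, g i j • b j i) with hSdef
  -- counting via indicators
  have hcount : ((Nat.card {x : Fin (ℓ + 1) → Fin n → ZMod p //
        ∀ j i, P i (formApply (L j) x) = b j i}) : ℂ)
      = ∑ x : Fin (ℓ + 1) → Fin n → ZMod p,
          (if (∀ j i, P i (formApply (L j) x) = b j i) then (1 : ℂ) else 0) := by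
    rw [Nat.card_eq_fintype_card, Fintype.card_subtype, Finset.card_filter]
    push_cast
    rfl
  have hsum : ((Nat.card {x : Fin (ℓ + 1) → Fin n → ZMod p //
        ∀ j i, P i (formApply (L j) x) = b j i}) : ℂ)
      = (∑ g ∈ F, S g) / (Qn : ℂ) := by
    rw [hcount]
    simp_rw [hpoint]
    rw [← Finset.sum_div]
    congr 1
    rw [hSdef]
    exact Finset.sum_comm
  -- good terms
  have hgood : ∀ g ∈ F.filter (fun g => ∀ i, g i ∈ Λ i), S g = (N : ℂ) := by
    intro g hg
    obtain ⟨-, hgΛ⟩ := Finset.mem_filter.mp hg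
    have hA0 : ∀ x : Fin (ℓ + 1) → Fin n → ZMod p,
        (∑ i, ∑ j, g i j • P i (formApply (L j) x)) = 0 := by
      intro x
      refine Finset.sum_eq_zero fun i _ => ?_
      exact (hgΛ i).2 n (P i) (hdeg i) (hdepth i) x
    have hB0 : (∑ i, ∑ j, g i j • b j i) = 0 :=
      Finset.sum_eq_zero fun i _ => (hcons i).2 (g i) (hgΛ i)
    rw [hSdef]
    simp only [hA0, hB0, sub_zero, ee_zero']
    simp [hNdef]
  -- number of good terms
  have hcardFg : (F.filter (fun g => ∀ i, g i ∈ Λ i)).card = ∏ i, (Λ i).ncard := by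
    have hFgeq : F.filter (fun g => ∀ i, g i ∈ Λ i)
        = Fintype.piFinset (fun i => (hΛfin i).toFinset) := by
      ext g
      simp only [Finset.mem_filter, Fintype.mem_piFinset, Set.Finite.mem_toFinset]
      constructor
      · rintro ⟨-, h⟩; exact h
      · intro h
        exact ⟨(hmemF g).mpr fun i j => (h i).1 j, h⟩
    rw [hFgeq, Fintype.card_piFinset]
    exact Finset.prod_congr rfl fun i _ =>
      (Set.ncard_eq_toFinset_card (Λ i) (hΛfin i)).symm
  -- bad terms are small
  have hbad : ∀ g ∈ F.filter (fun g => ¬ ∀ i, g i ∈ Λ i),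
      ‖S g‖ ≤ ε * N := by
    intro g hg
    obtain ⟨hgF, hgb⟩ := Finset.mem_filter.mp hg
    have hb : ∀ i j, g i j < q i := (hmemF g).mp hgF
    obtain ⟨hiff2, hlt⟩ := hortho g hb
    have hne : ¬ ∀ x : Fin (ℓ + 1) → Fin n → ZMod p,
        (∑ i, ∑ j, g i j • P i (formApply (L j) x)) = 0 :=
      fun h => hgb (hiff2.mp h)
    have hcv := hlt hne
    have hSval : S g = (∑ x : Fin (ℓ + 1) → Fin n → ZMod p,
        ee (∑ i, ∑ j, g i j • P i (formApply (L j) x)))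
          * ee (-(∑ i, ∑ j, g i j • b j i)) := by
      rw [hSdef, Finset.sum_mul]
      exact Finset.sum_congr rfl fun x _ => by rw [sub_eq_add_neg, ee_add']
    have hcavg : (∑ x : Fin (ℓ + 1) → Fin n → ZMod p,
        ee (∑ i, ∑ j, g i j • P i (formApply (L j) x)))
          = cavg (fun x : Fin (ℓ + 1) → Fin n → ZMod p =>
              ee (∑ i, ∑ j, g i j • P i (formApply (L j) x))) * (N : ℂ) := by
      rw [cavg, ← hNdef]
      rw [div_mul_cancel₀ _ (Nat.cast_ne_zero.mpr hNpos.ne')]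
    rw [hSval, norm_mul, abs_ee', mul_one, hcavg, norm_mul, Complex.norm_natCast]
    exact mul_le_mul_of_nonneg_right hcv.le (Nat.cast_nonneg N)
  -- split the sum
  have hsplit : (∑ g ∈ F, S g)
      = (∏ i, ((Λ i).ncard : ℂ)) * (N : ℂ)
        + ∑ g ∈ F.filter (fun g => ¬ ∀ i, g i ∈ Λ i), S g := by
    rw [← Finset.sum_filter_add_sum_filter_not F (fun g => ∀ i, g i ∈ Λ i)]
    congr 1
    rw [Finset.sum_congr rfl hgood, Finset.sum_const, hcardFg, nsmul_eq_mul]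
    push_cast
    ring
  -- cast facts
  have hN0 : (N : ℂ) ≠ 0 := Nat.cast_ne_zero.mpr hNpos.ne'
  have hQ0 : (Qn : ℂ) ≠ 0 := Nat.cast_ne_zero.mpr hQnpos.ne'
  -- the difference is the bad part
  have key : ((Nat.card {x : Fin (ℓ + 1) → Fin n → ZMod p //
        ∀ j i, P i (formApply (L j) x) = b j i}) : ℂ) / (N : ℂ)
      - (∏ i, ((Λ i).ncard : ℂ)) / (Qn : ℂ)
      = (∑ g ∈ F.filter (fun g => ¬ ∀ i, g i ∈ Λ i), S g) / ((Qn : ℂ) * (N : ℂ)) := by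
    rw [hsum, hsplit]
    field_simp
    ring
  -- bound the bad part
  have hcardFb : (F.filter (fun g => ¬ ∀ i, g i ∈ Λ i)).card ≤ Qn := by
    rw [← hcardF]
    exact Finset.card_filter_le _ _
  have hbound : ‖(∑ g ∈ F.filter (fun g => ¬ ∀ i, g i ∈ Λ i), S g)
      / ((Qn : ℂ) * (N : ℂ))‖ ≤ ε := by
    rw [norm_div, norm_mul, Complex.norm_natCast, Complex.norm_natCast]
    rw [div_le_iff₀ (by positivity)]
    calc ‖∑ g ∈ F.filter (fun g => ¬ ∀ i, g i ∈ Λ i), S g‖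
        ≤ ∑ g ∈ F.filter (fun g => ¬ ∀ i, g i ∈ Λ i), ‖S g‖ :=
          norm_sum_le _ _
      _ ≤ ∑ _g ∈ F.filter (fun g => ¬ ∀ i, g i ∈ Λ i), ε * N :=
          Finset.sum_le_sum hbad
      _ = (F.filter (fun g => ¬ ∀ i, g i ∈ Λ i)).card * (ε * N) := by
          rw [Finset.sum_const, nsmul_eq_mul]
      _ ≤ (Qn : ℝ) * (ε * N) := by
          apply mul_le_mul_of_nonneg_right _ (by positivity)
          exact_mod_cast hcardFb
      _ = ε * ((Qn : ℝ) * (N : ℝ)) := by ring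
  -- put everything together
  have hQreal : ((∏ i, (p : ℝ) ^ (k i + 1)) ^ m) = (Qn : ℝ) := by
    rw [hQndef]
    simp only [hqdef]
    push_cast
    rw [← Finset.prod_pow]
  set R : ℝ := (Nat.card {x : Fin (ℓ + 1) → Fin n → ZMod p //
        ∀ j i, P i (formApply (L j) x) = b j i} : ℝ) /
      (Fintype.card (Fin (ℓ + 1) → Fin n → ZMod p) : ℝ)
    - (∏ i, (Set.ncard (DepSet p (k i) (dd i) L) : ℝ)) /
        (∏ i, (p : ℝ) ^ (k i + 1)) ^ m with hRdef
  have hRC : (R : ℂ) = (∑ g ∈ F.filter (fun g => ¬ ∀ i, g i ∈ Λ i), S g)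
      / ((Qn : ℂ) * (N : ℂ)) := by
    rw [← key, hRdef, hQreal, ← hNdef]
    push_cast
    rfl
  calc |R| = ‖(R : ℂ)‖ := by rw [Complex.norm_real, Real.norm_eq_abs]
    _ ≤ ε := by rw [hRC]; exact hbound

end
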